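/- Let A be an n×n Hermitian complex matrix, c > 0 a real number, and N ≥ 0 a real number, such that Tr(A^{2m}) = N·c^{2m} for every natural number m ≥ 1. Then the trace norm of A equals N·c: ‖A‖₁ = N·c. (This justifies the replica-limit evaluation of negativities from flat spectra: the even-power traces determine that all nonzero eigenvalues of A have absolute value c, with N of them in total.) -/

import Mathlib

open scoped ComplexOrder Matrix

noncomputable section

/-- The trace norm `‖M‖₁ = Tr√(MᴴM)` of a complex matrix. -/
def traceNorm {m n : Type*} [Fintype m] [Fintype n] [DecidableEq n]
    (M : Matrix m n ℂ) : ℝ :=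
  ((Matrix.posSemidef_conjTranspose_mul_self M).1.eigenvectorUnitary.1 *
    Matrix.diagonal (((↑) : ℝ → ℂ) ∘ (√·) ∘ (Matrix.posSemidef_conjTranspose_mul_self M).1.eigenvalues) *
    (star (Matrix.posSemidef_conjTranspose_mul_self M).1.eigenvectorUnitary :
      Matrix n n ℂ)).trace.re

end

/-- If a Hermitian matrix `A` satisfies `Tr(A^{2m}) = N·c^{2m}` for all `m ≥ 1`
(with `c > 0`, `N ≥ 0`), then `‖A‖₁ = N·c`. -/
theorem traceNorm_of_flat_spectrum {n : ℕ} (A : Matrix (Fin n) (Fin n) ℂ)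
    (hA : A.IsHermitian) (c : ℝ) (hc : 0 < c) (N : ℝ) (hN : 0 ≤ N)
    (h : ∀ m : ℕ, 1 ≤ m → (A ^ (2 * m)).trace = ((N * c ^ (2 * m) : ℝ) : ℂ)) :
    traceNorm A = N * c := by
  classical
  set μ := hA.eigenvalues with hμ
  set U : Matrix (Fin n) (Fin n) ℂ := (hA.eigenvectorUnitary : Matrix (Fin n) (Fin n) ℂ) with hUdef
  have hU1 : star U * U = 1 := Unitary.coe_star_mul_self hA.eigenvectorUnitary
  have hU2 : U * star U = 1 := Unitary.coe_mul_star_self hA.eigenvectorUnitary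
  have hspec : A = U * Matrix.diagonal (RCLike.ofReal ∘ μ) * star U := hA.spectral_theorem
  have hAk : ∀ k : ℕ, A ^ k = U * (Matrix.diagonal (RCLike.ofReal ∘ μ)) ^ k * star U := by
    intro k
    induction k with
    | zero => simp [hU2]
    | succ k ih =>
      rw [pow_succ, ih]
      conv_lhs => rw [hspec]
      simp only [Matrix.mul_assoc]
      rw [show star U * (U * (Matrix.diagonal (RCLike.ofReal ∘ μ) * star U))
        = (star U * U) * (Matrix.diagonal (RCLike.ofReal ∘ μ) * star U) by
          simp only [Matrix.mul_assoc], hU1, one_mul,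
        show Matrix.diagonal (RCLike.ofReal ∘ μ) ^ k * (Matrix.diagonal (RCLike.ofReal ∘ μ) * star U)
        = Matrix.diagonal (RCLike.ofReal ∘ μ) ^ (k+1) * star U by
          rw [pow_succ]; simp only [Matrix.mul_assoc]]
  have htr : ∀ k : ℕ, (A ^ k).trace = ∑ i, (μ i : ℂ) ^ k := by
    intro k
    rw [hAk, Matrix.trace_mul_cycle, hU1, one_mul,
      Matrix.diagonal_pow, Matrix.trace_diagonal]
    simp
  have hsum : ∀ m : ℕ, 1 ≤ m → ∑ i, μ i ^ (2 * m) = N * c ^ (2 * m) := by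
    intro m hm
    exact_mod_cast (htr (2 * m)).symm.trans (h m hm)
  have e2 := hsum 1 le_rfl
  have e4 := hsum 2 (by norm_num)
  have e6 := hsum 3 (by norm_num)
  norm_num at e2 e4 e6
  have hkey : ∀ i, |μ i| = μ i ^ 2 / c := by
    have hzero : ∑ i, μ i ^ 2 * (μ i ^ 2 - c ^ 2) ^ 2 = 0 := by
      have : ∑ i, μ i ^ 2 * (μ i ^ 2 - c ^ 2) ^ 2
          = (∑ i, μ i ^ 6) - 2 * c ^ 2 * (∑ i, μ i ^ 4) + c ^ 4 * (∑ i, μ i ^ 2) := by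
        rw [Finset.mul_sum, Finset.mul_sum, ← Finset.sum_sub_distrib, ← Finset.sum_add_distrib]
        exact Finset.sum_congr rfl fun i _ => by ring
      rw [this, e2, e4, e6]; ring
    have hterm : ∀ i ∈ Finset.univ, μ i ^ 2 * (μ i ^ 2 - c ^ 2) ^ 2 = 0 := by
      rw [← Finset.sum_eq_zero_iff_of_nonneg]
      · exact hzero
      · intro i _; positivity
    intro i
    have := hterm i (Finset.mem_univ i)
    rcases mul_eq_zero.mp this with h1 | h1
    · have : μ i = 0 := by nlinarith [sq_nonneg (μ i)]
      simp [this]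
    · have : μ i ^ 2 = c ^ 2 := by nlinarith
      have habs : |μ i| = c := by
        rw [← Real.sqrt_sq_eq_abs, this, Real.sqrt_sq hc.le]
      rw [this, habs, sq, mul_div_assoc, div_self hc.ne', mul_one]
  set D : Matrix (Fin n) (Fin n) ℂ := Matrix.diagonal (RCLike.ofReal ∘ fun i => |μ i|) with hD
  set C : Matrix (Fin n) (Fin n) ℂ := U * D * star U with hCdef
  have hDpsd : D.PosSemidef := by
    refine Matrix.posSemidef_diagonal_iff.mpr fun i => ?_
    exact RCLike.ofReal_nonneg.mpr (abs_nonneg _)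
  have hC : C.PosSemidef := by
    rw [hCdef]
    simpa [Matrix.star_eq_conjTranspose] using hDpsd.mul_mul_conjTranspose_same U
  have hC2 : C ^ 2 = Aᴴ * A := by
    rw [hA.eq, ← pow_two, hAk 2, hCdef, pow_two]
    simp only [Matrix.mul_assoc]
    rw [show star U * (U * (D * star U)) = (star U * U) * (D * star U) by
      simp only [Matrix.mul_assoc], hU1, one_mul]
    congr 1
    rw [← Matrix.mul_assoc, hD, Matrix.diagonal_mul_diagonal, pow_two,
      Matrix.diagonal_mul_diagonal]
    congr 2
    funext i
    simp only [Pi.mul_apply, Function.comp_apply, ← RCLike.ofReal_mul, abs_mul_abs_self]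
  have hsqrt : C = (Matrix.posSemidef_conjTranspose_mul_self A).1.eigenvectorUnitary.1 *
      Matrix.diagonal (((↑) : ℝ → ℂ) ∘ (√·) ∘ (Matrix.posSemidef_conjTranspose_mul_self A).1.eigenvalues) *
      (star (Matrix.posSemidef_conjTranspose_mul_self A).1.eigenvectorUnitary :
        Matrix (Fin n) (Fin n) ℂ) := by
    open scoped MatrixOrder in
    have hB := Matrix.posSemidef_conjTranspose_mul_self A
    have e1 := hB.1.cfc_eq Real.sqrt
    rw [Matrix.IsHermitian.cfc, Unitary.conjStarAlgAut_apply] at e1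
    refine Eq.trans ?_ e1
    rw [← cfcₙ_eq_cfc (hf0 := Real.sqrt_zero), ← CFC.sqrt_eq_real_sqrt _ hB.nonneg]
    exact (CFC.sqrt_unique (by rw [← pow_two, hC2]) hC.nonneg).symm
  have htrC : C.trace = ∑ i, ((|μ i| : ℝ) : ℂ) := by
    rw [hCdef, Matrix.trace_mul_cycle, hU1, one_mul, hD, Matrix.trace_diagonal]
    simp
  rw [traceNorm, ← hsqrt, htrC]
  have hre : (∑ i, ((|μ i| : ℝ) : ℂ)).re = ∑ i, |μ i| := by
    rw [Complex.re_sum]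
    simp
  rw [hre]
  have : ∑ i, |μ i| = (∑ i, μ i ^ 2) / c := by
    rw [Finset.sum_div]
    exact Finset.sum_congr rfl fun i _ => hkey i
  rw [this, e2, sq]; field_simp
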